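/- Let (X_i)_{i≥1} be i.i.d. random vectors in ℝ^d whose common law has density f₀, and let x, y ∈ ℝ^d be two points at which f₀ is continuous and strictly positive. For each m, let k_m ∈ ℕ with k_m → ∞ and k_m/m → 0, and let L_m(z) = inf{ r ≥ 0 : #{ i ≤ m : ‖X_i − z‖ ≤ r } ≥ k_m } denote the k_m-th nearest-neighbor distance of a point z to the sample. Then the anomaly evidence statistic D_m = d · (log L_m(x) − log L_m(y)) converges in probability, as m → ∞, to log( f₁(x) / f₀(x) ), where f₁ is the constant (uniform) density taking the value f₀(y); equivalently, D_m → log f₀(y) − log f₀(x) in probability. -/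

import Mathlib

open MeasureTheory ProbabilityTheory Filter

lemma knn_mem {m k : ℕ} (g : ℕ → ℝ) (hkm : k ≤ m) :
    sInf {r : ℝ | 0 ≤ r ∧ k ≤ ((Finset.range m).filter (fun i => g i ≤ r)).card} ∈
    {r : ℝ | 0 ≤ r ∧ k ≤ ((Finset.range m).filter (fun i => g i ≤ r)).card} := by
  classical
  set S := {r : ℝ | 0 ≤ r ∧ k ≤ ((Finset.range m).filter (fun i => g i ≤ r)).card} with hS
  have hbdd : BddBelow S := ⟨0, fun r hr => hr.1⟩
  have hne : S.Nonempty := by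
    rcases ((Finset.range m).image g).exists_le with ⟨R, hR⟩
    refine ⟨max R 0, le_max_right _ _, ?_⟩
    have : (Finset.range m).filter (fun i => g i ≤ max R 0) = Finset.range m := by
      refine Finset.filter_true_of_mem (fun i hi => ?_)
      exact le_trans (hR _ (Finset.mem_image_of_mem g hi)) (le_max_left _ _)
    rw [this, Finset.card_range]; exact hkm
  set s := sInf S with hs
  have hs0 : 0 ≤ s := le_csInf hne (fun r hr => hr.1)
  refine ⟨hs0, ?_⟩
  set T := (Finset.range m).filter (fun i => s < g i) with hT
  by_cases hTe : T = ∅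
  · have : (Finset.range m).filter (fun i => g i ≤ s) = Finset.range m := by
      refine Finset.filter_true_of_mem (fun i hi => ?_)
      by_contra h
      have : i ∈ T := Finset.mem_filter.2 ⟨hi, lt_of_not_ge h⟩
      simp [hTe] at this
    rw [this, Finset.card_range]; exact hkm
  · have hTne : T.Nonempty := Finset.nonempty_of_ne_empty hTe
    set δ := (T.image (fun i => g i - s)).min' (hTne.image _) with hδ
    have hδpos : 0 < δ := by
      rw [hδ, Finset.lt_min'_iff]
      intro b hb
      rcases Finset.mem_image.1 hb with ⟨i, hi, rfl⟩
      have := (Finset.mem_filter.1 hi).2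
      linarith
    have : s < s + δ := by linarith
    rcases (csInf_lt_iff hbdd hne).1 (show sInf S < s + δ from this) with ⟨r', hr'S, hr'lt⟩
    have hsub : (Finset.range m).filter (fun i => g i ≤ r') ⊆
        (Finset.range m).filter (fun i => g i ≤ s) := by
      intro i hi
      rcases Finset.mem_filter.1 hi with ⟨him, hgi⟩
      refine Finset.mem_filter.2 ⟨him, ?_⟩
      by_contra h
      have hiT : i ∈ T := Finset.mem_filter.2 ⟨him, lt_of_not_ge h⟩
      have : δ ≤ g i - s := Finset.min'_le _ _ (Finset.mem_image_of_mem _ hiT)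
      linarith
    exact le_trans hr'S.2 (Finset.card_le_card hsub)

lemma knn_le_iff' {m k : ℕ} (g : ℕ → ℝ) (hkm : k ≤ m) {r : ℝ} (hr : 0 ≤ r) :
    sInf {r : ℝ | 0 ≤ r ∧ k ≤ ((Finset.range m).filter (fun i => g i ≤ r)).card} ≤ r ↔
    k ≤ ((Finset.range m).filter (fun i => g i ≤ r)).card := by
  constructor
  · intro h
    have hmem := knn_mem g hkm
    refine le_trans hmem.2 (Finset.card_le_card ?_)
    intro i hi
    rcases Finset.mem_filter.1 hi with ⟨him, hgi⟩
    exact Finset.mem_filter.2 ⟨him, le_trans hgi h⟩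
  · intro h
    exact csInf_le ⟨0, fun r hr => hr.1⟩ ⟨hr, h⟩

lemma alg_aux {f C m kr c t : ℝ} (hf : f ≠ 0) (hC : C ≠ 0) (hm : m ≠ 0) :
    (f * t) * ((c * kr / (m * (C * f))) * C) * m = t * c * kr := by
  field_simp



section Aux
variable {d : ℕ} {Ω : Type*} [MeasureSpace Ω] [IsProbabilityMeasure (ℙ : Measure Ω)]

lemma indicator_count_cheb' {Ω : Type*} [MeasureSpace Ω] [IsProbabilityMeasure (ℙ : Measure Ω)]
    {E : Type*} [MeasurableSpace E] (X : ℕ → Ω → E)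
    (hmeas : ∀ i, Measurable (X i))
    (hindep : iIndepFun X ℙ)
    (B : Set E) (hB : MeasurableSet B) (q : ℝ) (hq : ∀ i, (ℙ (X i ⁻¹' B)).toReal = q)
    (m : ℕ) {c : ℝ} (hc : 0 < c) :
    ℙ {ω | c ≤ |(∑ i ∈ Finset.range m, (X i ⁻¹' B).indicator (fun _ => (1:ℝ)) ω) - m * q|}
      ≤ ENNReal.ofReal (m * q / c ^ 2) := by
  classical
  set Y : ℕ → Ω → ℝ := fun i => (X i ⁻¹' B).indicator (fun _ => (1:ℝ)) with hY
  have hA : ∀ i, MeasurableSet (X i ⁻¹' B) := fun i => (hmeas i) hB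
  have hYmem : ∀ i, MemLp (Y i) 2 ℙ := fun i =>
    memLp_indicator_const 2 (hA i) 1 (Or.inr (measure_ne_top _ _))
  have hNmem : MemLp (fun ω => ∑ i ∈ Finset.range m, Y i ω) 2 ℙ := by
    have h := memLp_finset_sum' (μ := (ℙ : Measure Ω)) (Finset.range m)
      (fun i _ => hYmem i)
    have : (∑ i ∈ Finset.range m, Y i) = (fun ω => ∑ i ∈ Finset.range m, Y i ω) := by
      funext ω; simp
    rwa [this] at h
  have hEY : ∀ i, ∫ ω, Y i ω ∂ℙ = q := by
    intro i
    rw [hY]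
    simp only []
    rw [integral_indicator_const (1:ℝ) (hA i)]
    simp [Measure.real, hq i]
  have hEN : ∫ ω, (∑ i ∈ Finset.range m, Y i ω) ∂ℙ = m * q := by
    rw [integral_finset_sum _ (fun i _ => (hYmem i).integrable one_le_two)]
    simp [hEY]
  have hvarY : ∀ i, variance (Y i) ℙ ≤ q := by
    intro i
    have hsq : (fun ω => Y i ω ^ 2) = Y i := by
      funext ω
      by_cases h : ω ∈ X i ⁻¹' B <;> simp [hY, Set.indicator_apply, h]
    calc variance (Y i) ℙ ≤ ∫ ω, Y i ω ^ 2 ∂ℙ := variance_le_expectation_sq (hYmem i).aestronglyMeasurable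
      _ = q := by rw [show (fun ω => Y i ω ^ 2) = Y i from hsq] at *; exact hEY i
  have hpair : Set.Pairwise ↑(Finset.range m) (fun i j => IndepFun (Y i) (Y j) ℙ) := by
    intro i _ j _ hij
    exact (hindep.indepFun hij).comp (measurable_const.indicator hB) (measurable_const.indicator hB)
  have hvarN : variance (fun ω => ∑ i ∈ Finset.range m, Y i ω) ℙ ≤ m * q := by
    have h := IndepFun.variance_sum (μ := (ℙ : Measure Ω)) (fun i _ => hYmem i) hpair
    have h2 : variance (fun ω => ∑ i ∈ Finset.range m, Y i ω) ℙ
        = ∑ i ∈ Finset.range m, variance (Y i) ℙ := by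
      rw [← h]; congr 1; funext ω; simp
    rw [h2]
    calc ∑ i ∈ Finset.range m, variance (Y i) ℙ ≤ ∑ i ∈ Finset.range m, q :=
        Finset.sum_le_sum (fun i _ => hvarY i)
      _ = m * q := by simp [mul_comm]
  have hcheb := meas_ge_le_variance_div_sq (μ := (ℙ : Measure Ω)) hNmem hc
  rw [hEN] at hcheb
  refine le_trans hcheb (ENNReal.ofReal_le_ofReal ?_)
  exact div_le_div_of_nonneg_right hvarN (by positivity) |>.trans (le_refl _)

lemma density_ball_bounds' {d : ℕ} (f₀ : EuclideanSpace ℝ (Fin d) → ℝ)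
    (z : EuclideanSpace ℝ (Fin d)) (hcont : ContinuousAt f₀ z) {ε' : ℝ} (hε' : 0 < ε') :
    ∃ r₀ > (0:ℝ), ∀ r : ℝ, 0 < r → r ≤ r₀ →
      ENNReal.ofReal (f₀ z - ε') * volume (Metric.closedBall z r) ≤
        (volume.withDensity (fun w => ENNReal.ofReal (f₀ w))) (Metric.closedBall z r) ∧
      (volume.withDensity (fun w => ENNReal.ofReal (f₀ w))) (Metric.closedBall z r) ≤
        ENNReal.ofReal (f₀ z + ε') * volume (Metric.closedBall z r) := by
  rcases Metric.continuousAt_iff.1 hcont ε' hε' with ⟨δ, hδpos, hδ⟩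
  refine ⟨δ/2, by linarith, fun r hr hrδ => ?_⟩
  have hball : ∀ w ∈ Metric.closedBall z r, |f₀ w - f₀ z| < ε' := by
    intro w hw
    have : dist w z < δ := lt_of_le_of_lt (le_trans hw (by linarith)) (by linarith)
    simpa [Real.dist_eq] using hδ this
  rw [withDensity_apply _ measurableSet_closedBall]
  constructor
  · calc ENNReal.ofReal (f₀ z - ε') * volume (Metric.closedBall z r)
        = ∫⁻ _ in Metric.closedBall z r, ENNReal.ofReal (f₀ z - ε') ∂volume := by
          rw [setLIntegral_const, mul_comm]
      _ ≤ ∫⁻ w in Metric.closedBall z r, ENNReal.ofReal (f₀ w) ∂volume := by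
          refine lintegral_mono_ae ?_
          refine (ae_restrict_iff' measurableSet_closedBall).2 (ae_of_all _ (fun w hw => ?_))
          exact ENNReal.ofReal_le_ofReal (by have := abs_lt.1 (hball w hw); linarith)
  · calc ∫⁻ w in Metric.closedBall z r, ENNReal.ofReal (f₀ w) ∂volume
        ≤ ∫⁻ _ in Metric.closedBall z r, ENNReal.ofReal (f₀ z + ε') ∂volume := by
          refine lintegral_mono_ae ?_
          refine (ae_restrict_iff' measurableSet_closedBall).2 (ae_of_all _ (fun w hw => ?_))
          exact ENNReal.ofReal_le_ofReal (by have := abs_lt.1 (hball w hw); linarith)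
      _ = ENNReal.ofReal (f₀ z + ε') * volume (Metric.closedBall z r) := by
          rw [setLIntegral_const, mul_comm]

set_option maxHeartbeats 2000000 in
lemma per_point (hd : d ≠ 0)
    (X : ℕ → Ω → EuclideanSpace ℝ (Fin d))
    (f₀ : EuclideanSpace ℝ (Fin d) → ℝ)
    (hmeas : ∀ i, Measurable (X i))
    (hindep : iIndepFun X ℙ)
    (hdist : ∀ i, Measure.map (X i) ℙ = volume.withDensity (fun z => ENNReal.ofReal (f₀ z)))
    (z : EuclideanSpace ℝ (Fin d))
    (hcont : ContinuousAt f₀ z) (hpos : 0 < f₀ z)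
    (k : ℕ → ℕ) (hktop : Tendsto k atTop atTop)
    (hk0 : Tendsto (fun m : ℕ => (k m : ℝ) / m) atTop (nhds 0))
    (Lz : ℕ → Ω → ℝ)
    (hLz : ∀ m ω, Lz m ω = sInf {r : ℝ | 0 ≤ r ∧
      k m ≤ ((Finset.range m).filter (fun i => dist (X i ω) z ≤ r)).card})
    {ε₁ : ℝ} (hε₁ : 0 < ε₁) :
    Tendsto (fun m => ℙ {ω | ε₁ ≤ |(d : ℝ) * Real.log (Lz m ω)
        - Real.log ((k m : ℝ) / (m : ℝ))
        + Real.log ((volume (Metric.ball (0 : EuclideanSpace ℝ (Fin d)) 1)).toReal * f₀ z)|})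
      atTop (nhds 0) := by
  classical
  set C : ℝ := (volume (Metric.ball (0 : EuclideanSpace ℝ (Fin d)) 1)).toReal with hCdef
  have hCpos : 0 < C := ENNReal.toReal_pos
    (Metric.measure_ball_pos volume 0 one_pos).ne' measure_ball_lt_top.ne
  set f : ℝ := f₀ z with hfdef
  have hf : 0 < f := hpos
  set ε : ℝ := min (1/2) (ε₁/4) with hεdef
  have hε : 0 < ε := lt_min (by norm_num) (by linarith)
  have hεhalf : ε ≤ 1/2 := min_le_left _ _
  have hε4 : ε ≤ ε₁/4 := min_le_right _ _
  set s : ℝ := ε / (2*(1+ε)) with hsdef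
  have hspos : 0 < s := by rw [hsdef]; positivity
  have hsε : s * (1+ε) = ε/2 := by
    rw [hsdef]; field_simp
  clear_value C f ε s
  have hs1 : s < 1 := by nlinarith
  have hshalf : s ≤ ε/2 := by nlinarith
  have hlogp : Real.log (1+ε) < ε₁ := by
    have := Real.log_le_sub_one_of_pos (show (0:ℝ) < 1+ε by linarith)
    linarith
  have hlogm : -Real.log (1-ε) < ε₁ := by
    have h1 : (0:ℝ) < 1-ε := by linarith
    have h2 := Real.log_le_sub_one_of_pos (show (0:ℝ) < (1-ε)⁻¹ by positivity)
    rw [Real.log_inv] at h2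
    have h3 : (1-ε)⁻¹ - 1 = ε / (1-ε) := by field_simp; ring
    have h4 : ε / (1-ε) ≤ 2*ε := by
      rw [div_le_iff₀ h1]; nlinarith
    linarith
  set ε' : ℝ := f * s with hε'def
  have hε' : 0 < ε' := mul_pos hf hspos
  have hε'f : ε' < f := by rw [hε'def]; nlinarith
  obtain ⟨r₀, hr₀pos, hr₀⟩ := density_ball_bounds' f₀ z hcont hε'
  set μ₀ : Measure (EuclideanSpace ℝ (Fin d)) :=
    volume.withDensity (fun w => ENNReal.ofReal (f₀ w)) with hμ₀
  have hprob : IsProbabilityMeasure μ₀ := by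
    rw [← hdist 0]; exact Measure.isProbabilityMeasure_map (hmeas 0).aemeasurable
  set τ : ℝ := min (1/2) (C*f*r₀^d/(1+ε)) with hτdef
  have hτpos : 0 < τ := lt_min (by norm_num)
    (div_pos (mul_pos (mul_pos hCpos hf) (pow_pos hr₀pos d)) (by linarith))
  have hτhalf : τ ≤ 1/2 := min_le_left _ _
  have hτ2 : τ ≤ C*f*r₀^d/(1+ε) := min_le_right _ _
  clear_value ε' τ
  -- rewrite hr₀ in terms of f
  rw [← hfdef] at hr₀
  -- main eventual bound
  have hev : ∀ᶠ m in atTop, ℙ {ω | ε₁ ≤ |(d : ℝ) * Real.log (Lz m ω)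
        - Real.log ((k m : ℝ) / (m : ℝ)) + Real.log (C * f)|}
      ≤ ENNReal.ofReal (4/ε^2 / (k m : ℝ)) + ENNReal.ofReal (12/ε^2 / (k m : ℝ)) := by
    have h1 : ∀ᶠ m in atTop, 1 ≤ m := eventually_ge_atTop 1
    have h2 : ∀ᶠ m : ℕ in atTop, 1 ≤ k m := hktop.eventually (eventually_ge_atTop 1)
    have h3 : ∀ᶠ m : ℕ in atTop, (k m : ℝ)/m < τ := hk0.eventually_lt_const hτpos
    filter_upwards [h1, h2, h3] with m hm1 hkm1 hkmτ
    have hm0 : (0:ℝ) < m := by exact_mod_cast hm1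
    set kr : ℝ := (k m : ℝ) with hkrdef
    have hk0' : (0:ℝ) < kr := by rw [hkrdef]; exact_mod_cast hkm1
    have hkm : k m ≤ m := by
      by_contra h
      push_neg at h
      have h5 : (m:ℝ) ≤ kr := by rw [hkrdef]; exact_mod_cast h.le
      have h6 : (1:ℝ) ≤ kr/m := (le_div_iff₀ hm0).2 (by linarith)
      linarith
    set ρ : ℝ → ℝ := fun c => (c * kr / (m * (C*f))) ^ ((d:ℝ)⁻¹) with hρdef
    set pm : ℝ → ℝ := fun c => (μ₀ (Metric.closedBall z (ρ c))).toReal with hpmdef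
    clear_value ρ pm
    have hCf : (0:ℝ) < C * f := mul_pos hCpos hf
    have key : ∀ c : ℝ, 0 < c → c ≤ 1+ε →
        0 < ρ c ∧
        (d:ℝ) * Real.log (ρ c) = Real.log c + Real.log (kr/(m:ℝ)) - Real.log (C*f) ∧
        (1-s)*c*kr ≤ m * pm c ∧ m * pm c ≤ (1+s)*c*kr := by
      intro c hc hc'
      have hb : 0 < c * kr / (m * (C*f)) :=
        div_pos (mul_pos hc hk0') (mul_pos hm0 hCf)
      have hρpos : 0 < ρ c := by
        simp only [hρdef]; exact Real.rpow_pos_of_pos hb _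
      have hρd : (ρ c)^d = c * kr / (m * (C*f)) := by
        simp only [hρdef]; exact Real.rpow_inv_natCast_pow hb.le hd
      have hρr₀ : ρ c ≤ r₀ := by
        refine le_of_pow_le_pow_left₀ hd hr₀pos.le ?_
        rw [hρd]
        have hτ3 : kr/(m:ℝ) ≤ C*f*r₀^d/(1+ε) := le_trans hkmτ.le hτ2
        rw [div_le_div_iff₀ hm0 (by linarith : (0:ℝ) < 1+ε)] at hτ3
        rw [div_le_iff₀ (mul_pos hm0 hCf)]
        nlinarith
      have hlog : (d:ℝ) * Real.log (ρ c) = Real.log c + Real.log (kr/(m:ℝ)) - Real.log (C*f) := by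
        have e1 : Real.log ((ρ c)^d) = (d:ℝ) * Real.log (ρ c) := by
          rw [Real.log_pow]
        rw [← e1, hρd]
        have e2 : c * kr / ((m:ℝ) * (C*f)) = c * ((kr/(m:ℝ)) / (C*f)) := by
          rw [div_div, mul_div_assoc]
        rw [e2, Real.log_mul hc.ne' (div_pos (div_pos hk0' hm0) hCf).ne',
          Real.log_div (div_pos hk0' hm0).ne' hCf.ne']
        ring
      have hdb := hr₀ (ρ c) hρpos hρr₀
      have hvol : volume (Metric.closedBall z (ρ c)) =
          ENNReal.ofReal ((ρ c)^d) * volume (Metric.ball (0 : EuclideanSpace ℝ (Fin d)) 1) := by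
        have h := Measure.addHaar_closedBall (volume : Measure (EuclideanSpace ℝ (Fin d))) z
          hρpos.le
        rwa [finrank_euclideanSpace_fin] at h
      have hfin : μ₀ (Metric.closedBall z (ρ c)) ≠ ⊤ := measure_ne_top _ _
      have hlon : (0:ℝ) ≤ f - ε' := by linarith
      have hhin : (0:ℝ) ≤ f + ε' := by linarith
      have hρnn : (0:ℝ) ≤ (ρ c)^d := pow_nonneg hρpos.le d
      have hlo : (f - ε') * ((ρ c)^d * C) ≤ pm c := by
        have h := ENNReal.toReal_mono hfin hdb.1
        rw [hvol, ENNReal.toReal_mul, ENNReal.toReal_ofReal hlon,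
          ENNReal.toReal_mul, ENNReal.toReal_ofReal hρnn, ← hCdef] at h
        simp only [hpmdef]
        exact h
      have hhi : pm c ≤ (f + ε') * ((ρ c)^d * C) := by
        have hne : ENNReal.ofReal (f + ε') * volume (Metric.closedBall z (ρ c)) ≠ ⊤ :=
          ENNReal.mul_ne_top ENNReal.ofReal_ne_top measure_closedBall_lt_top.ne
        have h := ENNReal.toReal_mono hne hdb.2
        rw [hvol, ENNReal.toReal_mul, ENNReal.toReal_ofReal hhin,
          ENNReal.toReal_mul, ENNReal.toReal_ofReal hρnn, ← hCdef] at h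
        simp only [hpmdef]
        exact h
      have hpmnn : 0 ≤ pm c := by
        simp only [hpmdef]; exact ENNReal.toReal_nonneg
      refine ⟨hρpos, hlog, ?_, ?_⟩
      · have h1' := mul_le_mul_of_nonneg_right hlo (le_of_lt hm0)
        have efs : f - ε' = f * (1-s) := by rw [hε'def]; ring
        have e : (f - ε') * ((ρ c)^d * C) * m = (1-s)*c*kr := by
          rw [hρd, efs, alg_aux hf.ne' hCpos.ne' (ne_of_gt hm0)]
        have h2' : (1-s)*c*kr ≤ pm c * m := by rw [← e]; exact h1'
        exact h2'.trans (le_of_eq (mul_comm (pm c) (m:ℝ)))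
      · have h1' := mul_le_mul_of_nonneg_right hhi (le_of_lt hm0)
        have efs : f + ε' = f * (1+s) := by rw [hε'def]; ring
        have e : (f + ε') * ((ρ c)^d * C) * m = (1+s)*c*kr := by
          rw [hρd, efs, alg_aux hf.ne' hCpos.ne' (ne_of_gt hm0)]
        have h2' : pm c * m ≤ (1+s)*c*kr := by rw [← e]; exact h1'
        exact (le_of_eq (mul_comm ((m:ℝ)) (pm c))).trans h2'
    have hq : ∀ c' : ℝ, ∀ i, (ℙ (X i ⁻¹' Metric.closedBall z (ρ c'))).toReal = pm c' := by
      intro c' i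
      simp only [hpmdef]
      rw [← Measure.map_apply (hmeas i) measurableSet_closedBall, hdist i]
    have hpmnn : ∀ c', 0 ≤ pm c' := by
      intro c'; simp only [hpmdef]; exact ENNReal.toReal_nonneg
    obtain ⟨hρ₁pos, hρ₁log, hρ₁lo, hρ₁hi⟩ := key (1-ε) (by linarith) (by linarith)
    obtain ⟨hρ₂pos, hρ₂log, hρ₂lo, hρ₂hi⟩ := key (1+ε) (by linarith) le_rfl
    have hub1 : m * pm (1-ε) ≤ (1 - ε/2) * kr := by nlinarith
    have hlb2 : (1 + ε/2) * kr ≤ m * pm (1+ε) := by nlinarith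
    have hub2 : m * pm (1+ε) ≤ 3 * kr := by nlinarith
    set N : ℝ → Ω → ℝ := fun r ω =>
      ∑ i ∈ Finset.range m, (X i ⁻¹' Metric.closedBall z r).indicator (fun _ => (1:ℝ)) ω
      with hNdef
    have hcard : ∀ (r : ℝ) (ω : Ω),
        ((((Finset.range m).filter (fun i => dist (X i ω) z ≤ r)).card : ℝ)) = N r ω := by
      intro r ω
      simp only [hNdef]
      rw [Finset.card_filter]
      push_cast
      refine Finset.sum_congr rfl (fun i _ => ?_)
      by_cases h : dist (X i ω) z ≤ r <;>
        simp [Set.indicator_apply, Set.mem_preimage, Metric.mem_closedBall, h]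
    have hcheb : ∀ c' : ℝ, ∀ {cc : ℝ}, 0 < cc →
        ℙ {ω | cc ≤ |N (ρ c') ω - m * pm c'|}
          ≤ ENNReal.ofReal (m * pm c' / cc ^ 2) := by
      intro c' cc hcc
      have h := indicator_count_cheb' X hmeas hindep
        (Metric.closedBall z (ρ c')) measurableSet_closedBall (pm c') (hq c') m hcc
      have hset : {ω | cc ≤ |N (ρ c') ω - m * pm c'|}
          = {ω | cc ≤ |(∑ i ∈ Finset.range m,
              (X i ⁻¹' Metric.closedBall z (ρ c')).indicator (fun _ => (1:ℝ)) ω) - m * pm c'|} := by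
        simp only [hNdef]
      rw [hset]
      exact h
    clear_value N
    have hc₁pos : 0 < kr - m * pm (1-ε) := by nlinarith
    have hc₂pos : 0 < m * pm (1+ε) - kr := by nlinarith
    have hc₁ge : ε/2 * kr ≤ kr - m * pm (1-ε) := by nlinarith
    have hc₂ge : ε/2 * kr ≤ m * pm (1+ε) - kr := by nlinarith
    have hqpos : (0:ℝ) < ε/2 * kr := by nlinarith
    have hbad1 : ℙ {ω | kr ≤ N (ρ (1-ε)) ω} ≤ ENNReal.ofReal (4/ε^2 / kr) := by
      have hsub : {ω | kr ≤ N (ρ (1-ε)) ω} ⊆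
          {ω | kr - m * pm (1-ε) ≤ |N (ρ (1-ε)) ω - m * pm (1-ε)|} := by
        intro ω hω
        simp only [Set.mem_setOf_eq] at hω ⊢
        have : kr - m * pm (1-ε) ≤ N (ρ (1-ε)) ω - m * pm (1-ε) := by linarith
        exact le_trans this (le_abs_self _)
      refine le_trans (measure_mono hsub) (le_trans (hcheb (1-ε) hc₁pos)
        (ENNReal.ofReal_le_ofReal ?_))
      calc m * pm (1-ε) / (kr - m * pm (1-ε)) ^ 2
          ≤ m * pm (1-ε) / (ε/2 * kr) ^ 2 := by
            apply div_le_div_of_nonneg_left (by nlinarith) (pow_pos hqpos 2)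
            exact pow_le_pow_left₀ hqpos.le hc₁ge 2
        _ ≤ kr / (ε/2 * kr) ^ 2 := by
            apply (div_le_div_iff_of_pos_right (pow_pos hqpos 2)).2
            nlinarith
        _ = 4/ε^2 / kr := by
            field_simp
            ring
    have hbad2 : ℙ {ω | ¬ (kr ≤ N (ρ (1+ε)) ω)} ≤ ENNReal.ofReal (12/ε^2 / kr) := by
      have hsub : {ω | ¬ (kr ≤ N (ρ (1+ε)) ω)} ⊆
          {ω | m * pm (1+ε) - kr ≤ |N (ρ (1+ε)) ω - m * pm (1+ε)|} := by
        intro ω hω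
        simp only [Set.mem_setOf_eq, not_le] at hω
        simp only [Set.mem_setOf_eq]
        rw [abs_sub_comm]
        have h7 : m * pm (1+ε) - kr ≤ m * pm (1+ε) - N (ρ (1+ε)) ω := by linarith
        exact le_trans h7 (le_abs_self _)
      refine le_trans (measure_mono hsub) (le_trans (hcheb (1+ε) hc₂pos)
        (ENNReal.ofReal_le_ofReal ?_))
      calc m * pm (1+ε) / (m * pm (1+ε) - kr) ^ 2
          ≤ m * pm (1+ε) / (ε/2 * kr) ^ 2 := by
            apply div_le_div_of_nonneg_left (by nlinarith) (pow_pos hqpos 2)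
            exact pow_le_pow_left₀ hqpos.le hc₂ge 2
        _ ≤ 3 * kr / (ε/2 * kr) ^ 2 := (div_le_div_iff_of_pos_right (pow_pos hqpos 2)).2 hub2
        _ = 12/ε^2 / kr := by
            field_simp
            ring
    -- event inclusion
    have hsubmain : {ω | ε₁ ≤ |(d : ℝ) * Real.log (Lz m ω)
          - Real.log (kr / (m : ℝ)) + Real.log (C * f)|} ⊆
        {ω | kr ≤ N (ρ (1-ε)) ω} ∪ {ω | ¬ (kr ≤ N (ρ (1+ε)) ω)} := by
      intro ω hω
      simp only [Set.mem_setOf_eq] at hω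
      by_contra h
      simp only [Set.mem_union, Set.mem_setOf_eq, not_or, not_not] at h
      obtain ⟨hN1, hN2⟩ := h
      have hN1' : ¬ (k m ≤ ((Finset.range m).filter
          (fun i => dist (X i ω) z ≤ ρ (1-ε))).card) := by
        intro hcon
        refine hN1 ?_
        rw [← hcard (ρ (1-ε)) ω, hkrdef]
        exact_mod_cast hcon
      have hN2' : k m ≤ ((Finset.range m).filter
          (fun i => dist (X i ω) z ≤ ρ (1+ε))).card := by
        rw [← hcard (ρ (1+ε)) ω, hkrdef] at hN2
        exact_mod_cast hN2
      have hL2 : Lz m ω ≤ ρ (1+ε) := by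
        rw [hLz m ω]
        exact (knn_le_iff' (fun i => dist (X i ω) z) hkm hρ₂pos.le).2 hN2'
      have hL1 : ρ (1-ε) < Lz m ω := by
        rw [hLz m ω]
        by_contra hcon
        push_neg at hcon
        exact hN1' ((knn_le_iff' (fun i => dist (X i ω) z) hkm hρ₁pos.le).1 hcon)
      have hLpos : 0 < Lz m ω := lt_trans hρ₁pos hL1
      have hup : (d:ℝ) * Real.log (Lz m ω) ≤ (d:ℝ) * Real.log (ρ (1+ε)) :=
        mul_le_mul_of_nonneg_left ((Real.log_le_log_iff hLpos hρ₂pos).2 hL2)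
          (Nat.cast_nonneg d)
      have hdlt : (0:ℝ) < (d:ℝ) := by
        have : 1 ≤ d := Nat.one_le_iff_ne_zero.2 hd
        exact_mod_cast Nat.lt_of_lt_of_le Nat.zero_lt_one this
      have hlo' : (d:ℝ) * Real.log (ρ (1-ε)) < (d:ℝ) * Real.log (Lz m ω) :=
        mul_lt_mul_of_pos_left (Real.log_lt_log hρ₁pos hL1) hdlt
      rw [hρ₂log] at hup
      rw [hρ₁log] at hlo'
      have habs : |(d : ℝ) * Real.log (Lz m ω) - Real.log (kr / (m : ℝ))
          + Real.log (C * f)| < ε₁ := by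
        rw [abs_lt]
        constructor
        · linarith
        · linarith
      linarith
    calc ℙ {ω | ε₁ ≤ |(d : ℝ) * Real.log (Lz m ω)
          - Real.log (kr / (m : ℝ)) + Real.log (C * f)|}
        ≤ ℙ ({ω | kr ≤ N (ρ (1-ε)) ω} ∪ {ω | ¬ (kr ≤ N (ρ (1+ε)) ω)}) :=
          measure_mono hsubmain
      _ ≤ ℙ {ω | kr ≤ N (ρ (1-ε)) ω} + ℙ {ω | ¬ (kr ≤ N (ρ (1+ε)) ω)} := measure_union_le _ _
      _ ≤ ENNReal.ofReal (4/ε^2 / kr) + ENNReal.ofReal (12/ε^2 / kr) := add_le_add hbad1 hbad2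
  -- squeeze
  have hk' : Tendsto (fun m => (k m : ℝ)) atTop atTop := tendsto_natCast_atTop_atTop.comp hktop
  have t1 : Tendsto (fun m => ENNReal.ofReal (4/ε^2 / (k m : ℝ))
      + ENNReal.ofReal (12/ε^2 / (k m : ℝ))) atTop (nhds 0) := by
    have u1 : Tendsto (fun m => (4/ε^2) / (k m : ℝ)) atTop (nhds 0) :=
      Tendsto.div_atTop tendsto_const_nhds hk'
    have u2 : Tendsto (fun m => (12/ε^2) / (k m : ℝ)) atTop (nhds 0) :=
      Tendsto.div_atTop tendsto_const_nhds hk'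
    have := (ENNReal.tendsto_ofReal u1).add (ENNReal.tendsto_ofReal u2)
    simpa using this
  exact tendsto_of_tendsto_of_tendsto_of_le_of_le' tendsto_const_nhds t1
    (Eventually.of_forall (fun m => zero_le')) hev

end Aux

/-- Theorem 1 of the paper (asymptotic convergence of the ODIT anomaly evidence): for i.i.d.
samples `X i` in `ℝ^d` with common density `f₀`, continuous and positive at both `x` and `y`,
and `k m → ∞` with `k m / m → 0`, the anomaly evidence
`D m = d · (log L m x − log L m y)`, where `L m z` is the `k m`-th nearest-neighbor distance
of `z` to the first `m` samples, converges in probability to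
`log (f₁ x / f₀ x) = log (f₀ y) − log (f₀ x)`, where `f₁` is the constant (uniform) density
with value `f₀ y`. -/
theorem odit_evidence_tendsto_llr
    {d : ℕ} {Ω : Type*} [MeasureSpace Ω] [IsProbabilityMeasure (ℙ : Measure Ω)]
    (X : ℕ → Ω → EuclideanSpace ℝ (Fin d))
    (f₀ : EuclideanSpace ℝ (Fin d) → ℝ) (hf₀ : ∀ z, 0 ≤ f₀ z)
    (hmeas : ∀ i, Measurable (X i))
    (hindep : iIndepFun X ℙ)
    (hdist : ∀ i, Measure.map (X i) ℙ = volume.withDensity (fun z => ENNReal.ofReal (f₀ z)))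
    (x y : EuclideanSpace ℝ (Fin d))
    (hcontx : ContinuousAt f₀ x) (hposx : 0 < f₀ x)
    (hconty : ContinuousAt f₀ y) (hposy : 0 < f₀ y)
    (k : ℕ → ℕ) (hktop : Tendsto k atTop atTop)
    (hk0 : Tendsto (fun m : ℕ => (k m : ℝ) / m) atTop (nhds 0))
    (L : ℕ → EuclideanSpace ℝ (Fin d) → Ω → ℝ)
    (hL : ∀ m z ω, L m z ω = sInf {r : ℝ | 0 ≤ r ∧
      k m ≤ ((Finset.range m).filter (fun i => dist (X i ω) z ≤ r)).card})
    (f₁ : EuclideanSpace ℝ (Fin d) → ℝ) (hf₁ : ∀ z, f₁ z = f₀ y) :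
    TendstoInMeasure ℙ
      (fun m ω => (d : ℝ) * (Real.log (L m x ω) - Real.log (L m y ω)))
      atTop (fun _ => Real.log (f₁ x / f₀ x)) := by
  rw [tendstoInMeasure_iff_dist]
  by_cases hd : d = 0
  · subst hd
    have hxy : x = y := Subsingleton.elim x y
    have h0 : Real.log (f₁ x / f₀ x) = 0 := by
      rw [hf₁ x, hxy, div_self hposy.ne', Real.log_one]
    intro ε₀ hε₀
    have hempty : ∀ m : ℕ, {ω : Ω | ε₀ ≤ dist (((0:ℕ) : ℝ) *
        (Real.log (L m x ω) - Real.log (L m y ω))) (Real.log (f₁ x / f₀ x))} = ∅ := by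
      intro m
      ext ω
      simp [h0, Real.dist_eq, not_le, hε₀]
    have heq : (fun m => ℙ {ω | ε₀ ≤ dist (((0:ℕ) : ℝ) *
        (Real.log (L m x ω) - Real.log (L m y ω))) (Real.log (f₁ x / f₀ x))})
        = fun _ => (0 : ENNReal) := by
      funext m
      rw [hempty m, measure_empty]
    rw [heq]
    exact tendsto_const_nhds
  · intro ε₀ hε₀
    set C : ℝ := (volume (Metric.ball (0 : EuclideanSpace ℝ (Fin d)) 1)).toReal with hCdef
    have hCpos : 0 < C := ENNReal.toReal_pos
      (Metric.measure_ball_pos volume 0 one_pos).ne' measure_ball_lt_top.ne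
    have hx := per_point hd X f₀ hmeas hindep hdist x hcontx hposx k hktop hk0
      (fun m => L m x) (fun m ω => hL m x ω) (half_pos hε₀)
    have hy := per_point hd X f₀ hmeas hindep hdist y hconty hposy k hktop hk0
      (fun m => L m y) (fun m ω => hL m y ω) (half_pos hε₀)
    have hsum := hx.add hy
    refine tendsto_of_tendsto_of_tendsto_of_le_of_le' tendsto_const_nhds (by simpa using hsum)
      (Eventually.of_forall (fun m => zero_le')) (Eventually.of_forall (fun m => ?_))
    refine le_trans (measure_mono ?_) (measure_union_le _ _)
    intro ω hω
    by_contra h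
    simp only [Set.mem_union, Set.mem_setOf_eq, not_or, not_le] at h
    obtain ⟨h1, h2⟩ := h
    simp only [Set.mem_setOf_eq] at hω
    rw [Real.dist_eq, hf₁ x, Real.log_div hposy.ne' hposx.ne'] at hω
    have e : (d:ℝ) * (Real.log (L m x ω) - Real.log (L m y ω))
        - (Real.log (f₀ y) - Real.log (f₀ x))
        = ((d : ℝ) * Real.log (L m x ω) - Real.log ((k m : ℝ) / (m : ℝ))
            + Real.log (C * f₀ x))
          - ((d : ℝ) * Real.log (L m y ω) - Real.log ((k m : ℝ) / (m : ℝ))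
            + Real.log (C * f₀ y)) := by
      rw [Real.log_mul hCpos.ne' hposx.ne', Real.log_mul hCpos.ne' hposy.ne']
      ring
    rw [e] at hω
    rcases abs_lt.1 h1 with ⟨h1a, h1b⟩
    rcases abs_lt.1 h2 with ⟨h2a, h2b⟩
    have habs : |((d : ℝ) * Real.log (L m x ω) - Real.log ((k m : ℝ) / (m : ℝ))
            + Real.log (C * f₀ x))
          - ((d : ℝ) * Real.log (L m y ω) - Real.log ((k m : ℝ) / (m : ℝ))
            + Real.log (C * f₀ y))| < ε₀ := by
      rw [abs_lt]
      constructor <;> linarith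
    linarith
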